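/- (Monotonicity of relaxed Wyner common information in correlation) For 0 ≤ r₁ < r₂ ≤ 1/2 and t ≥ 0, C(r₁, t) ≥ C(r₂, t), where C(r, t) := inf over conditional distributions Q_{W|XY} with I_Q(X;Y|W) ≤ t of I_Q(XY;W), with (X,Y) ∼ DSBS(r). -/

import Mathlib

/-- The doubly symmetric binary source with crossover probability `r`. -/
noncomputable def dsbs (r : ℝ) : Bool × Bool → ℝ :=
  fun z => if z.1 = z.2 then (1 - r) / 2 else r / 2

/-- Joint distribution of `(X,Y,W)` where `(X,Y) ~ DSBS(r)` and `W` is generated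
from `(X,Y)` via the conditional distribution `Q`. -/
noncomputable def jointXYW (r : ℝ) {n : ℕ} (Q : Bool × Bool → Fin n → ℝ)
    (z : Bool × Bool) (w : Fin n) : ℝ := dsbs r z * Q z w

noncomputable def margW (r : ℝ) {n : ℕ} (Q : Bool × Bool → Fin n → ℝ) (w : Fin n) : ℝ :=
  ∑ z : Bool × Bool, jointXYW r Q z w

noncomputable def margXW (r : ℝ) {n : ℕ} (Q : Bool × Bool → Fin n → ℝ)
    (x : Bool) (w : Fin n) : ℝ := ∑ y : Bool, jointXYW r Q (x, y) w

noncomputable def margYW (r : ℝ) {n : ℕ} (Q : Bool × Bool → Fin n → ℝ)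
    (y : Bool) (w : Fin n) : ℝ := ∑ x : Bool, jointXYW r Q (x, y) w

/-- Mutual information `I(XY;W)` (base 2). -/
noncomputable def miXYW (r : ℝ) {n : ℕ} (Q : Bool × Bool → Fin n → ℝ) : ℝ :=
  ∑ z : Bool × Bool, ∑ w : Fin n,
    jointXYW r Q z w * Real.logb 2 (jointXYW r Q z w / (dsbs r z * margW r Q w))

/-- Conditional mutual information `I(X;Y|W)` (base 2). -/
noncomputable def cmiXY_W (r : ℝ) {n : ℕ} (Q : Bool × Bool → Fin n → ℝ) : ℝ :=
  ∑ x : Bool, ∑ y : Bool, ∑ w : Fin n,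
    jointXYW r Q (x, y) w *
      Real.logb 2 (jointXYW r Q (x, y) w * margW r Q w / (margXW r Q x w * margYW r Q y w))

/-- The `t`-relaxed Wyner common information of `DSBS(r)`. -/
noncomputable def relaxedC (r t : ℝ) : ℝ :=
  sInf {v : ℝ | ∃ (n : ℕ) (Q : Bool × Bool → Fin (n + 1) → ℝ),
    (∀ z w, 0 ≤ Q z w) ∧ (∀ z, ∑ w, Q z w = 1) ∧
    cmiXY_W r Q ≤ t ∧ v = miXYW r Q}

/-! ### Auxiliary analytic lemmas -/

lemma aux_klterm_ge (a b : ℝ) (ha : 0 ≤ a) (hb : 0 ≤ b) (hab : 0 < a → 0 < b) :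
    (a - b) / Real.log 2 ≤ a * Real.logb 2 (a / b) := by
  have hl2 : 0 < Real.log 2 := Real.log_pos (by norm_num)
  rcases eq_or_lt_of_le ha with h|h
  · rw [← h]
    simp only [zero_sub, zero_mul]
    exact div_nonpos_of_nonpos_of_nonneg (by linarith) hl2.le
  · have hb' := hab h
    rw [Real.logb, ← mul_div_assoc, div_le_div_iff_of_pos_right hl2]
    have hlog := Real.log_le_sub_one_of_pos (div_pos hb' h)
    have hrw : Real.log (a / b) = - Real.log (b / a) := by
      rw [← Real.log_inv, inv_div]
    rw [hrw]
    have h1 : a * Real.log (b / a) ≤ a * (b / a - 1) := mul_le_mul_of_nonneg_left hlog h.le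
    have h2 : a * (b / a - 1) = b - a := by field_simp
    have h3 : a * -Real.log (b / a) = -(a * Real.log (b / a)) := by ring
    linarith

lemma aux_logsum2 (a₁ a₂ b₁ b₂ : ℝ) (ha₁ : 0 ≤ a₁) (ha₂ : 0 ≤ a₂) (hb₁ : 0 ≤ b₁) (hb₂ : 0 ≤ b₂)
    (h₁ : 0 < a₁ → 0 < b₁) (h₂ : 0 < a₂ → 0 < b₂) :
    (a₁ + a₂) * Real.logb 2 ((a₁ + a₂) / (b₁ + b₂)) ≤
      a₁ * Real.logb 2 (a₁ / b₁) + a₂ * Real.logb 2 (a₂ / b₂) := by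
  rcases eq_or_lt_of_le ha₁ with e₁|p₁ <;> rcases eq_or_lt_of_le ha₂ with e₂|p₂
  · simp [← e₁, ← e₂]
  · have hb₂' := h₂ p₂
    rw [← e₁]
    simp only [zero_add, zero_mul]
    have : Real.logb 2 (a₂ / (b₁ + b₂)) ≤ Real.logb 2 (a₂ / b₂) := by
      exact Real.logb_le_logb_of_le (by norm_num) (by positivity)
        (div_le_div_of_nonneg_left p₂.le hb₂' (by linarith))
    nlinarith
  · have hb₁' := h₁ p₁
    rw [← e₂]
    simp only [add_zero, zero_mul]
    have : Real.logb 2 (a₁ / (b₁ + b₂)) ≤ Real.logb 2 (a₁ / b₁) := by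
      exact Real.logb_le_logb_of_le (by norm_num) (by positivity)
        (div_le_div_of_nonneg_left p₁.le hb₁' (by linarith))
    nlinarith
  · have hb₁' := h₁ p₁
    have hb₂' := h₂ p₂
    set s := a₁ + a₂ with hs
    set u := b₁ + b₂ with hu
    have hspos : 0 < s := by positivity
    have hupos : 0 < u := by positivity
    have k₁ := aux_klterm_ge a₁ (b₁ * s / u) ha₁ (by positivity) (fun _ => by positivity)
    have k₂ := aux_klterm_ge a₂ (b₂ * s / u) ha₂ (by positivity) (fun _ => by positivity)
    have r₁ : a₁ / (b₁ * s / u) = (a₁ / b₁) / (s / u) := by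
      field_simp
    have r₂ : a₂ / (b₂ * s / u) = (a₂ / b₂) / (s / u) := by
      field_simp
    rw [r₁, Real.logb_div (by positivity) (by positivity)] at k₁
    rw [r₂, Real.logb_div (by positivity) (by positivity)] at k₂
    have hbsum : a₁ - b₁ * s / u + (a₂ - b₂ * s / u) = 0 := by
      field_simp
      ring
    set L₁ := Real.logb 2 (a₁ / b₁)
    set L₂ := Real.logb 2 (a₂ / b₂)
    set Ls := Real.logb 2 (s / u)
    have e1 : a₁ * (L₁ - Ls) = a₁ * L₁ - a₁ * Ls := by ring
    have e2 : a₂ * (L₂ - Ls) = a₂ * L₂ - a₂ * Ls := by ring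
    have e3 : s * Ls = a₁ * Ls + a₂ * Ls := by rw [hs]; ring
    have hl2 : 0 < Real.log 2 := Real.log_pos (by norm_num)
    have hz : (a₁ - b₁ * s / u) / Real.log 2 + (a₂ - b₂ * s / u) / Real.log 2 = 0 := by
      rw [← add_div, hbsum, zero_div]
    linarith

lemma aux_dsbs_nonneg {r : ℝ} (h0 : 0 ≤ r) (h1 : r ≤ 1) (z : Bool × Bool) : 0 ≤ dsbs r z := by
  unfold dsbs; split <;> linarith

lemma aux_dsbs_pos {r : ℝ} (h0 : 0 < r) (h1 : r < 1) (z : Bool × Bool) : 0 < dsbs r z := by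
  unfold dsbs; split <;> linarith

lemma aux_sum_dsbs (r : ℝ) : ∑ z : Bool × Bool, dsbs r z = 1 := by
  rw [Fintype.sum_prod_type]
  simp [dsbs, Fintype.sum_bool]
  ring

lemma aux_joint_nonneg {r : ℝ} (h0 : 0 ≤ r) (h1 : r ≤ 1) {n : ℕ}
    (Q : Bool × Bool → Fin n → ℝ) (hQ0 : ∀ z w, 0 ≤ Q z w) (z : Bool × Bool) (w : Fin n) :
    0 ≤ jointXYW r Q z w :=
  mul_nonneg (aux_dsbs_nonneg h0 h1 z) (hQ0 z w)

lemma aux_joint_row {r : ℝ} {n : ℕ} (Q : Bool × Bool → Fin n → ℝ)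
    (hQ1 : ∀ z, ∑ w, Q z w = 1) (z : Bool × Bool) :
    ∑ w, jointXYW r Q z w = dsbs r z := by
  simp only [jointXYW, ← Finset.mul_sum, hQ1 z, mul_one]

lemma aux_joint_le_margW {r : ℝ} (h0 : 0 ≤ r) (h1 : r ≤ 1) {n : ℕ}
    (Q : Bool × Bool → Fin n → ℝ) (hQ0 : ∀ z w, 0 ≤ Q z w) (z : Bool × Bool) (w : Fin n) :
    jointXYW r Q z w ≤ margW r Q w :=
  Finset.single_le_sum (fun i _ => aux_joint_nonneg h0 h1 Q hQ0 i w) (Finset.mem_univ z)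

lemma aux_joint_le_margXW {r : ℝ} (h0 : 0 ≤ r) (h1 : r ≤ 1) {n : ℕ}
    (Q : Bool × Bool → Fin n → ℝ) (hQ0 : ∀ z w, 0 ≤ Q z w) (x y : Bool) (w : Fin n) :
    jointXYW r Q (x, y) w ≤ margXW r Q x w :=
  Finset.single_le_sum (fun i _ => aux_joint_nonneg h0 h1 Q hQ0 (x, i) w) (Finset.mem_univ y)

lemma aux_joint_le_margYW {r : ℝ} (h0 : 0 ≤ r) (h1 : r ≤ 1) {n : ℕ}
    (Q : Bool × Bool → Fin n → ℝ) (hQ0 : ∀ z w, 0 ≤ Q z w) (x y : Bool) (w : Fin n) :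
    jointXYW r Q (x, y) w ≤ margYW r Q y w :=
  Finset.single_le_sum (fun i _ => aux_joint_nonneg h0 h1 Q hQ0 (i, y) w) (Finset.mem_univ x)

lemma aux_margW_nonneg {r : ℝ} (h0 : 0 ≤ r) (h1 : r ≤ 1) {n : ℕ}
    (Q : Bool × Bool → Fin n → ℝ) (hQ0 : ∀ z w, 0 ≤ Q z w) (w : Fin n) :
    0 ≤ margW r Q w :=
  Finset.sum_nonneg (fun z _ => aux_joint_nonneg h0 h1 Q hQ0 z w)

lemma aux_margXW_nonneg {r : ℝ} (h0 : 0 ≤ r) (h1 : r ≤ 1) {n : ℕ}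
    (Q : Bool × Bool → Fin n → ℝ) (hQ0 : ∀ z w, 0 ≤ Q z w) (x : Bool) (w : Fin n) :
    0 ≤ margXW r Q x w :=
  Finset.sum_nonneg (fun y _ => aux_joint_nonneg h0 h1 Q hQ0 (x, y) w)

lemma aux_margYW_nonneg {r : ℝ} (h0 : 0 ≤ r) (h1 : r ≤ 1) {n : ℕ}
    (Q : Bool × Bool → Fin n → ℝ) (hQ0 : ∀ z w, 0 ≤ Q z w) (y : Bool) (w : Fin n) :
    0 ≤ margYW r Q y w :=
  Finset.sum_nonneg (fun x _ => aux_joint_nonneg h0 h1 Q hQ0 (x, y) w)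

lemma aux_dsbs_pos_of_joint_pos {r : ℝ} (h0 : 0 ≤ r) (h1 : r ≤ 1) {n : ℕ}
    (Q : Bool × Bool → Fin n → ℝ) {z : Bool × Bool} {w : Fin n}
    (h : 0 < jointXYW r Q z w) : 0 < dsbs r z := by
  rcases (aux_dsbs_nonneg h0 h1 z).lt_or_eq with h'|h'
  · exact h'
  · exfalso
    have hz : jointXYW r Q z w = 0 := by
      show dsbs r z * Q z w = 0
      rw [← h', zero_mul]
    rw [hz] at h
    exact lt_irrefl 0 h

lemma aux_miXYW_nonneg {r : ℝ} (h0 : 0 ≤ r) (h1 : r ≤ 1) {n : ℕ}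
    (Q : Bool × Bool → Fin (n + 1) → ℝ) (hQ0 : ∀ z w, 0 ≤ Q z w)
    (hQ1 : ∀ z, ∑ w, Q z w = 1) : 0 ≤ miXYW r Q := by
  have h1s : ∑ z : Bool × Bool, ∑ w, jointXYW r Q z w = 1 := by
    calc ∑ z : Bool × Bool, ∑ w, jointXYW r Q z w
        = ∑ z : Bool × Bool, dsbs r z :=
          Finset.sum_congr rfl (fun z _ => aux_joint_row Q hQ1 z)
      _ = 1 := aux_sum_dsbs r
  have hW : ∑ w, margW r Q w = 1 := by
    unfold margW
    rw [Finset.sum_comm]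
    exact h1s
  have h2s : ∑ z : Bool × Bool, ∑ w, dsbs r z * margW r Q w = 1 := by
    calc ∑ z : Bool × Bool, ∑ w, dsbs r z * margW r Q w
        = ∑ z : Bool × Bool, dsbs r z * ∑ w, margW r Q w := by
          simp [Finset.mul_sum]
      _ = 1 := by rw [hW]; simp only [mul_one]; exact aux_sum_dsbs r
  have hle : ∑ z : Bool × Bool, ∑ w,
      (jointXYW r Q z w - dsbs r z * margW r Q w) / Real.log 2 ≤ miXYW r Q := by
    unfold miXYW
    refine Finset.sum_le_sum (fun z _ => Finset.sum_le_sum (fun w _ => ?_))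
    refine aux_klterm_ge _ _ (aux_joint_nonneg h0 h1 Q hQ0 z w)
      (mul_nonneg (aux_dsbs_nonneg h0 h1 z) (aux_margW_nonneg h0 h1 Q hQ0 w)) (fun h => ?_)
    exact mul_pos (aux_dsbs_pos_of_joint_pos h0 h1 Q h)
      (lt_of_lt_of_le h (aux_joint_le_margW h0 h1 Q hQ0 z w))
  have hzero : ∑ z : Bool × Bool, ∑ w,
      (jointXYW r Q z w - dsbs r z * margW r Q w) / Real.log 2 = 0 := by
    simp only [← Finset.sum_div, Finset.sum_sub_distrib]
    rw [h1s, h2s]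
    simp
  linarith


/-- The deterministic channel `W = X`, used to show the feasible set is nonempty. -/
noncomputable def auxQ0 : Bool × Bool → Fin 2 → ℝ :=
  fun z w => if (w : ℕ) = cond z.1 1 0 then 1 else 0

lemma auxQ0_nonneg : ∀ (z : Bool × Bool) (w : Fin 2), 0 ≤ auxQ0 z w := by
  intro z w; unfold auxQ0; split <;> norm_num

lemma auxQ0_row : ∀ z : Bool × Bool, ∑ w, auxQ0 z w = 1 := by
  rintro ⟨x, y⟩; cases x <;> (simp only [auxQ0, Fin.sum_univ_two]; norm_num)

lemma auxQ0_cmi (r : ℝ) : cmiXY_W r auxQ0 = 0 := by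
  have key : ∀ d c : ℝ, d * Real.logb 2 (d * c / (c * d)) = 0 := by
    intro d c
    rcases eq_or_ne (d * c) 0 with h | h
    · rw [h, zero_div, Real.logb_zero, mul_zero]
    · rw [mul_comm c d, div_self h, Real.logb_one, mul_zero]
  simp only [cmiXY_W, jointXYW, margW, margXW, margYW, auxQ0, dsbs, Fintype.sum_bool,
    Fintype.sum_prod_type, Fin.sum_univ_two]
  norm_num
  rw [key, key, key, key]
  ring

lemma aux_exists_Q2 (r₁ r₂ : ℝ) (h0 : 0 ≤ r₁) (h12 : r₁ < r₂) (h2 : r₂ ≤ 1/2)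
    {n : ℕ} (Q : Bool × Bool → Fin (n + 1) → ℝ)
    (hQ0 : ∀ z w, 0 ≤ Q z w) (hQ1 : ∀ z, ∑ w, Q z w = 1) :
    ∃ Q₂ : Bool × Bool → Fin (n + 1) → ℝ,
      (∀ z w, 0 ≤ Q₂ z w) ∧ (∀ z, ∑ w, Q₂ z w = 1) ∧
      cmiXY_W r₂ Q₂ ≤ cmiXY_W r₁ Q ∧ miXYW r₂ Q₂ ≤ miXYW r₁ Q := by
  have hr₁half : r₁ < 1/2 := lt_of_lt_of_le h12 h2
  have hden : 0 < 1 - 2 * r₁ := by linarith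
  have h01 : r₁ ≤ 1 := by linarith
  have h02 : 0 ≤ r₂ := by linarith
  have h21 : r₂ ≤ 1 := by linarith
  set q : ℝ := (r₂ - r₁) / (1 - 2 * r₁) with hq
  have hq0 : 0 < q := div_pos (by linarith) hden
  have hqh : q ≤ 1/2 := by
    rw [hq, div_le_iff₀ hden]; linarith
  have hqe : q * (1 - 2 * r₁) = r₂ - r₁ := by
    rw [hq]; field_simp; exact mul_div_cancel_right₀ _ (by linarith)
  set fl : Bool → Bool → ℝ := fun a b => if a = b then 1 - q else q with hfl
  have flpos : ∀ a b, 0 < fl a b := by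
    intro a b; cases a <;> cases b <;> simp [hfl] <;> linarith
  have flnn : ∀ a b, 0 ≤ fl a b := fun a b => (flpos a b).le
  have hd2pos : ∀ z, 0 < dsbs r₂ z := aux_dsbs_pos (by linarith) (by linarith)
  have hd1nn : ∀ z, 0 ≤ dsbs r₁ z := aux_dsbs_nonneg h0 h01
  have hkey : ∀ x₂ y : Bool,
      fl true x₂ * dsbs r₁ (true, y) + fl false x₂ * dsbs r₁ (false, y) = dsbs r₂ (x₂, y) := by
    intro x₂ y
    cases x₂ <;> cases y <;>
      (simp only [hfl, dsbs]; norm_num; linarith [hqe])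
  -- the new channel
  set Q₂ : Bool × Bool → Fin (n + 1) → ℝ := fun z w =>
    (fl true z.1 * jointXYW r₁ Q (true, z.2) w + fl false z.1 * jointXYW r₁ Q (false, z.2) w) /
      dsbs r₂ z with hQ₂def
  have hJ1nn : ∀ z w, 0 ≤ jointXYW r₁ Q z w := aux_joint_nonneg h0 h01 Q hQ0
  have hQ₂0 : ∀ z w, 0 ≤ Q₂ z w := by
    intro z w
    simp only [hQ₂def]
    exact div_nonneg (add_nonneg (mul_nonneg (flnn _ _) (hJ1nn _ _))
      (mul_nonneg (flnn _ _) (hJ1nn _ _))) (hd2pos z).le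
  have hJ2 : ∀ (x y : Bool) (w : Fin (n + 1)), jointXYW r₂ Q₂ (x, y) w =
      fl true x * jointXYW r₁ Q (true, y) w + fl false x * jointXYW r₁ Q (false, y) w := by
    intro x y w
    show dsbs r₂ (x, y) * Q₂ (x, y) w = _
    simp only [hQ₂def]
    rw [mul_comm, div_mul_cancel₀ _ (hd2pos (x, y)).ne']
  have hQ₂1 : ∀ z, ∑ w, Q₂ z w = 1 := by
    rintro ⟨a, b⟩
    have : ∑ w, Q₂ (a, b) w = (fl true a * dsbs r₁ (true, b) + fl false a * dsbs r₁ (false, b)) /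
        dsbs r₂ (a, b) := by
      simp only [hQ₂def]
      rw [← Finset.sum_div, Finset.sum_add_distrib, ← Finset.mul_sum, ← Finset.mul_sum,
        aux_joint_row Q hQ1, aux_joint_row Q hQ1]
    rw [this, hkey a b, div_self (hd2pos (a, b)).ne']
  -- marginals
  have hmW : ∀ w, margW r₂ Q₂ w = margW r₁ Q w := by
    intro w
    simp only [margW, Fintype.sum_prod_type, Fintype.sum_bool, hJ2, hfl]
    norm_num
    ring
  have hmY : ∀ y w, margYW r₂ Q₂ y w = margYW r₁ Q y w := by
    intro y w
    simp only [margYW, Fintype.sum_bool, hJ2, hfl]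
    norm_num
    ring
  have hmX : ∀ x w, margXW r₂ Q₂ x w =
      fl true x * margXW r₁ Q true w + fl false x * margXW r₁ Q false w := by
    intro x w
    simp only [margXW, Fintype.sum_bool, hJ2]
    ring
  -- positivity helpers for r₁ quantities
  have hJposW : ∀ (z : Bool × Bool) (w : Fin (n + 1)),
      0 < jointXYW r₁ Q z w → 0 < margW r₁ Q w :=
    fun z w h => lt_of_lt_of_le h (aux_joint_le_margW h0 h01 Q hQ0 z w)
  have hJposD : ∀ (z : Bool × Bool) (w : Fin (n + 1)),
      0 < jointXYW r₁ Q z w → 0 < dsbs r₁ z :=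
    fun z w h => aux_dsbs_pos_of_joint_pos h0 h01 Q h
  have hJposX : ∀ (x y : Bool) (w : Fin (n + 1)),
      0 < jointXYW r₁ Q (x, y) w → 0 < margXW r₁ Q x w :=
    fun x y w h => lt_of_lt_of_le h (aux_joint_le_margXW h0 h01 Q hQ0 x y w)
  have hJposY : ∀ (x y : Bool) (w : Fin (n + 1)),
      0 < jointXYW r₁ Q (x, y) w → 0 < margYW r₁ Q y w :=
    fun x y w h => lt_of_lt_of_le h (aux_joint_le_margYW h0 h01 Q hQ0 x y w)
  have hm1nn : ∀ w, 0 ≤ margW r₁ Q w := aux_margW_nonneg h0 h01 Q hQ0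
  have hmX1nn : ∀ x w, 0 ≤ margXW r₁ Q x w := aux_margXW_nonneg h0 h01 Q hQ0
  have hmY1nn : ∀ y w, 0 ≤ margYW r₁ Q y w := aux_margYW_nonneg h0 h01 Q hQ0
  -- step A : pointwise bound for the mutual information terms
  have stepA : ∀ (x₂ y : Bool) (w : Fin (n + 1)),
      jointXYW r₂ Q₂ (x₂, y) w *
          Real.logb 2 (jointXYW r₂ Q₂ (x₂, y) w / (dsbs r₂ (x₂, y) * margW r₂ Q₂ w)) ≤
        fl true x₂ * (jointXYW r₁ Q (true, y) w *
          Real.logb 2 (jointXYW r₁ Q (true, y) w / (dsbs r₁ (true, y) * margW r₁ Q w))) +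
        fl false x₂ * (jointXYW r₁ Q (false, y) w *
          Real.logb 2 (jointXYW r₁ Q (false, y) w / (dsbs r₁ (false, y) * margW r₁ Q w))) := by
    intro x₂ y w
    rw [hmW w, hJ2]
    have e : dsbs r₂ (x₂, y) * margW r₁ Q w =
        fl true x₂ * (dsbs r₁ (true, y) * margW r₁ Q w) +
        fl false x₂ * (dsbs r₁ (false, y) * margW r₁ Q w) := by
      rw [← hkey x₂ y]; ring
    rw [e]
    have ls := aux_logsum2
      (fl true x₂ * jointXYW r₁ Q (true, y) w)
      (fl false x₂ * jointXYW r₁ Q (false, y) w)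
      (fl true x₂ * (dsbs r₁ (true, y) * margW r₁ Q w))
      (fl false x₂ * (dsbs r₁ (false, y) * margW r₁ Q w))
      (mul_nonneg (flnn _ _) (hJ1nn _ _)) (mul_nonneg (flnn _ _) (hJ1nn _ _))
      (mul_nonneg (flnn _ _) (mul_nonneg (hd1nn _) (hm1nn w)))
      (mul_nonneg (flnn _ _) (mul_nonneg (hd1nn _) (hm1nn w)))
      (by
        intro h
        have hJ : 0 < jointXYW r₁ Q (true, y) w := by
          rcases mul_pos_iff.mp h with ⟨_, h'⟩ | ⟨h', _⟩
          · exact h'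
          · exact absurd h' (not_lt.mpr (flnn _ _))
        exact mul_pos (flpos _ _) (mul_pos (hJposD _ w hJ) (hJposW _ w hJ)))
      (by
        intro h
        have hJ : 0 < jointXYW r₁ Q (false, y) w := by
          rcases mul_pos_iff.mp h with ⟨_, h'⟩ | ⟨h', _⟩
          · exact h'
          · exact absurd h' (not_lt.mpr (flnn _ _))
        exact mul_pos (flpos _ _) (mul_pos (hJposD _ w hJ) (hJposW _ w hJ)))
    rw [mul_div_mul_left _ _ (flpos true x₂).ne', mul_div_mul_left _ _ (flpos false x₂).ne'] at ls
    linarith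
  -- step B : pointwise bound for the conditional mutual information terms
  have stepB : ∀ (x₂ y : Bool) (w : Fin (n + 1)),
      jointXYW r₂ Q₂ (x₂, y) w *
          Real.logb 2 (jointXYW r₂ Q₂ (x₂, y) w * margW r₂ Q₂ w /
            (margXW r₂ Q₂ x₂ w * margYW r₂ Q₂ y w)) ≤
        fl true x₂ * (jointXYW r₁ Q (true, y) w *
          Real.logb 2 (jointXYW r₁ Q (true, y) w * margW r₁ Q w /
            (margXW r₁ Q true w * margYW r₁ Q y w))) +
        fl false x₂ * (jointXYW r₁ Q (false, y) w *
          Real.logb 2 (jointXYW r₁ Q (false, y) w * margW r₁ Q w /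
            (margXW r₁ Q false w * margYW r₁ Q y w))) := by
    intro x₂ y w
    rw [hmW w, hmY y w, hmX x₂ w, hJ2]
    have hre : ∀ A B C D : ℝ, A / (C * D / B) = A * B / (C * D) :=
      fun A B C D => div_div_eq_mul_div A (C * D) B
    simp only [← hre]
    have e : (fl true x₂ * margXW r₁ Q true w + fl false x₂ * margXW r₁ Q false w) *
        margYW r₁ Q y w / margW r₁ Q w =
        fl true x₂ * (margXW r₁ Q true w * margYW r₁ Q y w / margW r₁ Q w) +
        fl false x₂ * (margXW r₁ Q false w * margYW r₁ Q y w / margW r₁ Q w) := by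
      ring
    rw [e]
    have ls := aux_logsum2
      (fl true x₂ * jointXYW r₁ Q (true, y) w)
      (fl false x₂ * jointXYW r₁ Q (false, y) w)
      (fl true x₂ * (margXW r₁ Q true w * margYW r₁ Q y w / margW r₁ Q w))
      (fl false x₂ * (margXW r₁ Q false w * margYW r₁ Q y w / margW r₁ Q w))
      (mul_nonneg (flnn _ _) (hJ1nn _ _)) (mul_nonneg (flnn _ _) (hJ1nn _ _))
      (mul_nonneg (flnn _ _) (div_nonneg (mul_nonneg (hmX1nn _ _) (hmY1nn _ _)) (hm1nn w)))
      (mul_nonneg (flnn _ _) (div_nonneg (mul_nonneg (hmX1nn _ _) (hmY1nn _ _)) (hm1nn w)))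
      (by
        intro h
        have hJ : 0 < jointXYW r₁ Q (true, y) w := by
          rcases mul_pos_iff.mp h with ⟨_, h'⟩ | ⟨h', _⟩
          · exact h'
          · exact absurd h' (not_lt.mpr (flnn _ _))
        exact mul_pos (flpos _ _) (div_pos (mul_pos (hJposX _ _ w hJ) (hJposY _ _ w hJ))
          (hJposW _ w hJ)))
      (by
        intro h
        have hJ : 0 < jointXYW r₁ Q (false, y) w := by
          rcases mul_pos_iff.mp h with ⟨_, h'⟩ | ⟨h', _⟩
          · exact h'
          · exact absurd h' (not_lt.mpr (flnn _ _))
        exact mul_pos (flpos _ _) (div_pos (mul_pos (hJposX _ _ w hJ) (hJposY _ _ w hJ))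
          (hJposW _ w hJ)))
    rw [mul_div_mul_left _ _ (flpos true x₂).ne', mul_div_mul_left _ _ (flpos false x₂).ne'] at ls
    linarith
  -- summing up (A)
  have hA : miXYW r₂ Q₂ ≤ miXYW r₁ Q := by
    unfold miXYW
    simp only [Fintype.sum_prod_type, Fintype.sum_bool]
    have hy : ∀ y : Bool,
        (∑ w, jointXYW r₂ Q₂ (true, y) w * Real.logb 2 (jointXYW r₂ Q₂ (true, y) w /
            (dsbs r₂ (true, y) * margW r₂ Q₂ w))) +
        (∑ w, jointXYW r₂ Q₂ (false, y) w * Real.logb 2 (jointXYW r₂ Q₂ (false, y) w /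
            (dsbs r₂ (false, y) * margW r₂ Q₂ w))) ≤
        (∑ w, jointXYW r₁ Q (true, y) w * Real.logb 2 (jointXYW r₁ Q (true, y) w /
            (dsbs r₁ (true, y) * margW r₁ Q w))) +
        (∑ w, jointXYW r₁ Q (false, y) w * Real.logb 2 (jointXYW r₁ Q (false, y) w /
            (dsbs r₁ (false, y) * margW r₁ Q w))) := by
      intro y
      rw [← Finset.sum_add_distrib, ← Finset.sum_add_distrib]
      refine Finset.sum_le_sum (fun w _ => ?_)
      have h1 := stepA true y w
      have h2 := stepA false y w
      simp only [hfl] at h1 h2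
      norm_num at h1 h2
      linarith
    have ht := hy true
    have hf := hy false
    linarith
  -- summing up (B)
  have hB : cmiXY_W r₂ Q₂ ≤ cmiXY_W r₁ Q := by
    unfold cmiXY_W
    simp only [Fintype.sum_bool]
    have hy : ∀ y : Bool,
        (∑ w, jointXYW r₂ Q₂ (true, y) w * Real.logb 2 (jointXYW r₂ Q₂ (true, y) w *
            margW r₂ Q₂ w / (margXW r₂ Q₂ true w * margYW r₂ Q₂ y w))) +
        (∑ w, jointXYW r₂ Q₂ (false, y) w * Real.logb 2 (jointXYW r₂ Q₂ (false, y) w *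
            margW r₂ Q₂ w / (margXW r₂ Q₂ false w * margYW r₂ Q₂ y w))) ≤
        (∑ w, jointXYW r₁ Q (true, y) w * Real.logb 2 (jointXYW r₁ Q (true, y) w *
            margW r₁ Q w / (margXW r₁ Q true w * margYW r₁ Q y w))) +
        (∑ w, jointXYW r₁ Q (false, y) w * Real.logb 2 (jointXYW r₁ Q (false, y) w *
            margW r₁ Q w / (margXW r₁ Q false w * margYW r₁ Q y w))) := by
      intro y
      rw [← Finset.sum_add_distrib, ← Finset.sum_add_distrib]
      refine Finset.sum_le_sum (fun w _ => ?_)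
      have h1 := stepB true y w
      have h2 := stepB false y w
      simp only [hfl] at h1 h2
      norm_num at h1 h2
      linarith
    have ht := hy true
    have hf := hy false
    linarith
  exact ⟨Q₂, hQ₂0, hQ₂1, hB, hA⟩

lemma aux_main (r₁ r₂ t : ℝ) (h0 : 0 ≤ r₁) (h12 : r₁ < r₂) (h2 : r₂ ≤ 1/2)
    (ht : 0 ≤ t) : relaxedC r₂ t ≤ relaxedC r₁ t := by
  unfold relaxedC
  have hne : {v : ℝ | ∃ (n : ℕ) (Q : Bool × Bool → Fin (n + 1) → ℝ),
      (∀ z w, 0 ≤ Q z w) ∧ (∀ z, ∑ w, Q z w = 1) ∧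
      cmiXY_W r₁ Q ≤ t ∧ v = miXYW r₁ Q}.Nonempty :=
    ⟨miXYW r₁ auxQ0, 1, auxQ0, auxQ0_nonneg, auxQ0_row,
      by rw [auxQ0_cmi]; exact ht, rfl⟩
  refine le_csInf hne ?_
  rintro v ⟨n, Q, hQ0, hQ1, hcmi, rfl⟩
  obtain ⟨Q₂, hQ₂0, hQ₂1, hB, hA⟩ := aux_exists_Q2 r₁ r₂ h0 h12 h2 Q hQ0 hQ1
  have hbdd : BddBelow {v : ℝ | ∃ (n : ℕ) (Q : Bool × Bool → Fin (n + 1) → ℝ),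
      (∀ z w, 0 ≤ Q z w) ∧ (∀ z, ∑ w, Q z w = 1) ∧
      cmiXY_W r₂ Q ≤ t ∧ v = miXYW r₂ Q} := by
    refine ⟨0, ?_⟩
    rintro v ⟨n', Q', h0', h1', _, rfl⟩
    exact aux_miXYW_nonneg (le_trans h0 h12.le) (by linarith) Q' h0' h1'
  exact le_trans (csInf_le hbdd ⟨n, Q₂, hQ₂0, hQ₂1, le_trans hB hcmi, rfl⟩) hA

theorem stmt_12 (r₁ r₂ t : ℝ) (h0 : 0 ≤ r₁) (h12 : r₁ < r₂) (h2 : r₂ ≤ 1/2)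
    (ht : 0 ≤ t) : relaxedC r₂ t ≤ relaxedC r₁ t := by
  exact aux_main r₁ r₂ t h0 h12 h2 ht
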